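/- Let X be a complex Banach space with dim X > 2, let 𝒩 be a non-trivial nest on X with dim X_-^⊥ > 1, let 𝒜 be a subalgebra of Alg 𝒩 satisfying (♠1)–(♠5), let n ≥ 2, and let L : 𝒜 → B(X) be a Lie n-derivation. Then for every f ∈ X_-^⊥(𝒜)∖{0}, all nonzero x_1, x_2 ∈ X, every z ∈ X ∩ ker f, and all scalars c_1, c_2 ∈ ℂ satisfying (L(x_i⊗f) − h(x_i,f)I)z = c_i x_i for i = 1, 2, one has c_1 = c_2. -/

import Mathlib

open scoped Classical

set_option synthInstance.maxHeartbeats 1000000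
set_option maxHeartbeats 1000000

noncomputable section

/-- The `(n-1)`-th commutator polynomial `p_n(x_1, …, x_n)`, defined recursively by
`p_1(x_1) = x_1` and `p_k(x_1, …, x_k) = [p_{k-1}(x_1, …, x_{k-1}), x_k]`. -/
def commPoly {A : Type*} [NonUnitalNonAssocRing A] : (n : ℕ) → (Fin n → A) → A
  | 0, _ => 0
  | 1, a => a 0
  | n + 2, a =>
      commPoly (n + 1) (fun i => a i.castSucc) * a (Fin.last (n + 1)) -
        a (Fin.last (n + 1)) * commPoly (n + 1) (fun i => a i.castSucc)

/-- A nest of closed subspaces of `X`: it contains `{0}` and `X`, is totally ordered by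
inclusion, is closed under arbitrary intersections, and contains the norm-closed linear
span of the union of any subfamily. -/
structure IsNest {X : Type*} [NormedAddCommGroup X] [NormedSpace ℂ X]
    (𝒩 : Set (Submodule ℂ X)) : Prop where
  closed : ∀ N ∈ 𝒩, IsClosed (N : Set X)
  bot_mem : (⊥ : Submodule ℂ X) ∈ 𝒩
  top_mem : (⊤ : Submodule ℂ X) ∈ 𝒩
  total : ∀ N₁ ∈ 𝒩, ∀ N₂ ∈ 𝒩, N₁ ≤ N₂ ∨ N₂ ≤ N₁
  sInf_mem : ∀ S ⊆ 𝒩, sInf S ∈ 𝒩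
  closure_sSup_mem : ∀ S ⊆ 𝒩, (sSup S).topologicalClosure ∈ 𝒩

/-- The nest algebra `Alg 𝒩` of all bounded operators leaving every member of `𝒩`
invariant. -/
def nestAlgebra {X : Type*} [NormedAddCommGroup X] [NormedSpace ℂ X]
    (𝒩 : Set (Submodule ℂ X)) : Subalgebra ℂ (X →L[ℂ] X) where
  carrier := {T : X →L[ℂ] X | ∀ N ∈ 𝒩, ∀ x ∈ N, T x ∈ N}
  mul_mem' := fun {a b} ha hb N hN x hx => ha N hN _ (hb N hN x hx)
  one_mem' := fun N _ x hx => hx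
  add_mem' := fun {a b} ha hb N hN x hx => N.add_mem (ha N hN x hx) (hb N hN x hx)
  zero_mem' := fun N _ _ _ => N.zero_mem
  algebraMap_mem' := fun r N hN x hx => by
    simpa [Algebra.algebraMap_eq_smul_one] using N.smul_mem r hx

/-- `X₋` : the norm-closed linear span of the union of all members of `𝒩` different
from `X`. -/
def nestXminus {X : Type*} [NormedAddCommGroup X] [NormedSpace ℂ X]
    (𝒩 : Set (Submodule ℂ X)) : Submodule ℂ X :=
  (sSup {N | N ∈ 𝒩 ∧ N ≠ (⊤ : Submodule ℂ X)}).topologicalClosure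

/-- The annihilator of a subspace `S` of `X` inside the continuous dual `X*`. -/
def annihilatorOf {X : Type*} [NormedAddCommGroup X] [NormedSpace ℂ X]
    (S : Submodule ℂ X) : Submodule ℂ (X →L[ℂ] ℂ) where
  carrier := {f | ∀ x ∈ S, f x = 0}
  add_mem' := fun {f g} hf hg x hx => by simp [hf x hx, hg x hx]
  zero_mem' := fun x _ => by simp
  smul_mem' := fun c f hf x hx => by simp [hf x hx]

/-- `X(𝒜)` : the set of `x ∈ X` such that `x ⊗ f ∈ 𝒜` for some nonzero `f ∈ X*`.
Here `x ⊗ f` is the rank-one operator `y ↦ f(y) x`, i.e. `f.smulRight x`. -/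
def XofA {X : Type*} [NormedAddCommGroup X] [NormedSpace ℂ X]
    (𝒜 : NonUnitalSubalgebra ℂ (X →L[ℂ] X)) : Set X :=
  {x | ∃ f : X →L[ℂ] ℂ, f ≠ 0 ∧ f.smulRight x ∈ 𝒜}

/-- `X₋^⊥(𝒜)` : the set of `f ∈ X₋^⊥` such that `x ⊗ f ∈ 𝒜` for some nonzero
`x ∈ X`. -/
def XannA {X : Type*} [NormedAddCommGroup X] [NormedSpace ℂ X]
    (𝒩 : Set (Submodule ℂ X)) (𝒜 : NonUnitalSubalgebra ℂ (X →L[ℂ] X)) :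
    Set (X →L[ℂ] ℂ) :=
  {f | (∀ x ∈ nestXminus 𝒩, f x = 0) ∧ ∃ x : X, x ≠ 0 ∧ f.smulRight x ∈ 𝒜}

/-- `L` is a Lie `n`-derivation from the (not necessarily unital) subalgebra `𝒜` of
`B(X)` into `B(X)`. -/
def IsLieNDerivNU {X : Type*} [NormedAddCommGroup X] [NormedSpace ℂ X]
    (𝒜 : NonUnitalSubalgebra ℂ (X →L[ℂ] X)) (n : ℕ)
    (L : ↥𝒜 →ₗ[ℂ] (X →L[ℂ] X)) : Prop :=
  ∀ a : Fin n → ↥𝒜,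
    L (commPoly n a) =
      ∑ k : Fin n,
        commPoly n (Function.update (fun i => ((a i : X →L[ℂ] X))) k (L (a k)))

/-- The scalar `h(x, f)` attached to a Lie-type derivation `L`: it is `0` when
`f(x) = 0`, and `f(L(x ⊗ f) x) / f(x)` otherwise. -/
def hAux {X : Type*} [NormedAddCommGroup X] [NormedSpace ℂ X]
    (𝒜 : NonUnitalSubalgebra ℂ (X →L[ℂ] X)) (L : ↥𝒜 →ₗ[ℂ] (X →L[ℂ] X))
    (x : X) (f : X →L[ℂ] ℂ) : ℂ :=
  if f x = 0 then 0
  else if hm : f.smulRight x ∈ 𝒜 then f ((L ⟨f.smulRight x, hm⟩) x) / f x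
  else 0


lemma commPoly_succ_succ {A : Type*} [NonUnitalNonAssocRing A] (n : ℕ) (a : Fin (n+2) → A) :
    commPoly (n+2) a = commPoly (n + 1) (fun i => a i.castSucc) * a (Fin.last (n + 1)) -
        a (Fin.last (n + 1)) * commPoly (n + 1) (fun i => a i.castSucc) := rfl

lemma coe_commPoly {X : Type*} [NormedAddCommGroup X] [NormedSpace ℂ X]
    (𝒜 : NonUnitalSubalgebra ℂ (X →L[ℂ] X)) :
    ∀ (n : ℕ) (A : Fin n → ↥𝒜),
      ((commPoly n A : ↥𝒜) : X →L[ℂ] X) = commPoly n fun i => (A i : X →L[ℂ] X)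
  | 0, A => by simp [commPoly]
  | 1, A => rfl
  | (n + 2), A => by
    rw [commPoly_succ_succ, commPoly_succ_succ]
    push_cast [coe_commPoly 𝒜 (n + 1)]
    rfl

lemma commPoly_head {R : Type*} [NonUnitalNonAssocRing R] (b : R) :
    ∀ (m : ℕ) (g : Fin (m + 1) → R), (∀ i : Fin (m + 1), i ≠ 0 → g i = b) →
      commPoly (m + 1) g = (fun T => T * b - b * T)^[m] (g 0)
  | 0, g, _ => rfl
  | (m + 1), g, hg => by
    rw [commPoly_succ_succ]
    have hlast : g (Fin.last (m + 1)) = b := hg _ (by simp [Fin.ext_iff])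
    have hrec := commPoly_head b m (fun i => g i.castSucc)
      (fun i hi => hg _ (fun h => hi (Fin.castSucc_injective _ (h.trans Fin.castSucc_zero'.symm))))
    rw [hrec, hlast, Function.iterate_succ_apply']
    rfl

lemma commPoly_tail {R : Type*} [NonUnitalNonAssocRing R] (b : R) :
    ∀ (m k : ℕ) (hk : k ≤ m) (g : Fin (m + 1) → R),
      (∀ i : Fin (m + 1), k < (i : ℕ) → g i = b) →
      commPoly (m + 1) g =
        (fun T => T * b - b * T)^[m - k]
          (commPoly (k + 1) (fun i : Fin (k + 1) => g (Fin.castLE (Nat.succ_le_succ hk) i)))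
  | 0, k, hk, g, hg => by
    interval_cases k
    simp only [Nat.sub_self, Function.iterate_zero, id]
    congr 1
  | (m + 1), k, hk, g, hg => by
    rcases eq_or_lt_of_le hk with h | h
    · subst h
      simp only [Nat.sub_self, Function.iterate_zero, id]
      congr 1
    · have hk' : k ≤ m := by omega
      rw [commPoly_succ_succ]
      have hlast : g (Fin.last (m + 1)) = b := hg _ (by simpa using h)
      have hrec := commPoly_tail b m k hk' (fun i => g i.castSucc)
        (fun i hi => hg _ (by simpa using hi))
      rw [hrec, hlast]
      have htup : (fun i : Fin (k+1) => g ((Fin.castLE (Nat.succ_le_succ hk') i).castSucc))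
          = fun i : Fin (k+1) => g (Fin.castLE (Nat.succ_le_succ hk) i) := by
        funext i; congr 1
      rw [htup, show m + 1 - k = (m - k) + 1 by omega, Function.iterate_succ_apply']

lemma keyIdentity {X : Type*} [NormedAddCommGroup X] [NormedSpace ℂ X]
    (𝒜 : NonUnitalSubalgebra ℂ (X →L[ℂ] X)) (m : ℕ)
    (L : ↥𝒜 →ₗ[ℂ] (X →L[ℂ] X)) (hL : IsLieNDerivNU 𝒜 (m + 2) L)
    (f : X →L[ℂ] ℂ) (u x z : X) (hu : f u = 0) (hz : f z = 0)
    (hau : f.smulRight u ∈ 𝒜) (hbx : f.smulRight x ∈ 𝒜) :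
    (f x) ^ (m + 1) • ((L ⟨f.smulRight u, hau⟩) z) =
      ((-1 : ℂ) ^ (m + 1) * (f x) ^ m * f ((L ⟨f.smulRight u, hau⟩) z)) • x +
        ((f x) ^ m * f ((L ⟨f.smulRight x, hbx⟩) z)) • u := by
  set t : ℂ := f x with ht
  set a : X →L[ℂ] X := f.smulRight u with ha
  set b : X →L[ℂ] X := f.smulRight x with hb
  set D : (X →L[ℂ] X) → (X →L[ℂ] X) := fun T => T * b - b * T with hD
  have hbz : b z = 0 := by simp [hb, hz]
  have haz : a z = 0 := by simp [ha, hu, hz]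
  have hbapp : ∀ w : X, b w = f w • x := fun w => rfl
  have haapp : ∀ w : X, a w = f w • u := fun w => rfl
  have hab : a * b = t • a := by
    ext w; simp [ha, hb, ContinuousLinearMap.mul_apply, smul_smul, mul_comm]; rfl
  have hba : b * a = 0 := by
    ext w; simp [ha, hb, ContinuousLinearMap.mul_apply, hu]
  have hDa : D a = t • a := by rw [hD]; simp only [hab, hba, sub_zero]
  have hDsmul : ∀ (s : ℂ) (T : X →L[ℂ] X), D (s • T) = s • D T := by
    intro s T
    simp only [hD, smul_sub, smul_mul_assoc, mul_smul_comm]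
  have hDpow_smul : ∀ (j : ℕ) (s : ℂ) (T : X →L[ℂ] X), D^[j] (s • T) = s • D^[j] T := by
    intro j
    induction j with
    | zero => intro s T; simp
    | succ j ih =>
      intro s T
      rw [Function.iterate_succ_apply', Function.iterate_succ_apply', ih, hDsmul]
  have hDapow : ∀ j : ℕ, D^[j] a = t ^ j • a := by
    intro j
    induction j with
    | zero => simp
    | succ j ih =>
      rw [Function.iterate_succ_apply', ih, hDsmul, hDa, smul_smul, pow_succ]
  have hDz1 : ∀ T : X →L[ℂ] X, (D T) z = (-(f (T z))) • x := by
    intro T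
    show (T * b - b * T) z = _
    simp only [ContinuousLinearMap.sub_apply, ContinuousLinearMap.mul_apply, hbz, map_zero,
      zero_sub, hbapp, neg_smul]
  have hDz : ∀ (j : ℕ) (T : X →L[ℂ] X),
      (D^[j + 1] T) z = ((-1 : ℂ) ^ (j + 1) * t ^ j * f (T z)) • x := by
    intro j
    induction j with
    | zero =>
      intro T
      rw [Function.iterate_one, hDz1]
      congr 1
      ring
    | succ j ih =>
      intro T
      rw [Function.iterate_succ_apply', hDz1, ih, map_smul, smul_eq_mul]
      congr 1
      ring
  -- the tuple (a, b, b, …, b)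
  set A : Fin (m + 2) → ↥𝒜 := fun i => if i = 0 then (⟨a, hau⟩ : ↥𝒜) else ⟨b, hbx⟩ with hA
  have hAcoe : ∀ i, ((A i : X →L[ℂ] X)) = if i = 0 then a else b := by
    intro i; by_cases h : i = 0 <;> simp [hA, h]
  have hA0 : A 0 = ⟨a, hau⟩ := by simp [hA]
  have hP : commPoly (m + 2) A = (t ^ (m + 1)) • (⟨a, hau⟩ : ↥𝒜) := by
    apply Subtype.ext
    rw [coe_commPoly]
    rw [commPoly_head b (m + 1) _ (fun i hi => by rw [hAcoe, if_neg hi])]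
    rw [hAcoe 0, if_pos rfl, ← hD, hDapow (m + 1)]
    push_cast
    rfl
  have hsum := hL A
  rw [hP, map_smul] at hsum
  have hsumz := congrArg (fun T : X →L[ℂ] X => T z) hsum
  simp only [ContinuousLinearMap.smul_apply, ContinuousLinearMap.sum_apply] at hsumz
  have hterm : ∀ k : Fin (m + 2),
      (commPoly (m + 2) (Function.update (fun i => ((A i : X →L[ℂ] X))) k (L (A k)))) z =
        (if k = 0 then ((-1 : ℂ) ^ (m + 1) * t ^ m * f ((L ⟨a, hau⟩) z)) • x else 0) +
        (if k = Fin.last (m + 1) then (t ^ m * f ((L ⟨b, hbx⟩) z)) • u else 0) := by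
    intro k
    by_cases hk0 : k = 0
    · subst hk0
      rw [if_pos rfl, if_neg (by simp [Fin.ext_iff]), add_zero]
      rw [commPoly_head b (m + 1) _
        (fun i hi => by rw [Function.update_of_ne hi, hAcoe, if_neg hi])]
      rw [Function.update_self, hA0, ← hD, hDz m]
    · obtain ⟨kv, hklt⟩ := k
      have hkv0 : kv ≠ 0 := by
        intro h; exact hk0 (by simp [Fin.ext_iff, h])
      obtain ⟨j, rfl⟩ : ∃ j, kv = j + 1 := ⟨kv - 1, by omega⟩
      set kk : Fin (m + 2) := ⟨j + 1, hklt⟩ with hkk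
      have hne0 : kk ≠ 0 := by simp [hkk, Fin.ext_iff]
      rw [if_neg hne0]
      have hAk : A kk = ⟨b, hbx⟩ := by simp only [hA]; rw [if_neg hne0]
      have hjm1 : j + 1 ≤ m + 1 := by omega
      have hgb : ∀ i : Fin (m + 2), j + 1 < (i : ℕ) →
          Function.update (fun i => ((A i : X →L[ℂ] X))) kk (L (A kk)) i = b := by
        intro i hi
        rw [Function.update_of_ne (Fin.ne_of_val_ne (by simp [hkk]; omega)), hAcoe,
          if_neg (show i ≠ 0 by rintro rfl; simp at hi)]
      rw [commPoly_tail b (m + 1) (j + 1) hjm1 _ hgb]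
      rw [commPoly_succ_succ]
      have hlastidx : Fin.castLE (Nat.succ_le_succ hjm1) (Fin.last (j + 1)) = kk :=
        Fin.ext (by simp [hkk])
      rw [hlastidx, Function.update_self, hAk]
      have hpre : commPoly (j + 1)
          (fun i : Fin (j + 1) =>
            Function.update (fun i => ((A i : X →L[ℂ] X))) kk (L (A kk))
              (Fin.castLE (Nat.succ_le_succ hjm1) i.castSucc)) = t ^ j • a := by
        rw [commPoly_head b j _ (fun i hi => by
          rw [Function.update_of_ne (Fin.ne_of_val_ne (by simp [hkk]; omega)), hAcoe,
            if_neg (Fin.ne_of_val_ne (fun h => hi (Fin.ext (by simpa using h))))])]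
        rw [Function.update_of_ne (Fin.ne_of_val_ne (by simp [hkk])), hAcoe,
          if_pos (Fin.ext (by simp)), ← hD, hDapow j]
      rw [hAk] at hpre
      rw [hpre, smul_mul_assoc, mul_smul_comm, ← smul_sub]
      rw [show (fun T : X →L[ℂ] X => T * b - b * T) = D from hD.symm]
      rw [hDpow_smul]
      rw [ContinuousLinearMap.smul_apply]
      by_cases hjl : j = m
      · subst hjl
        rw [if_pos (Fin.ext (by simp [hkk])), zero_add]
        rw [show j + 1 - (j + 1) = 0 by omega, Function.iterate_zero, id_eq]
        rw [ContinuousLinearMap.sub_apply, ContinuousLinearMap.mul_apply,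
          ContinuousLinearMap.mul_apply, haz, map_zero, sub_zero, haapp, smul_smul]
      · rw [if_neg (Fin.ne_of_val_ne (by simp [hkk]; omega)), add_zero]
        rw [show m + 1 - (j + 1) = (m - j - 1) + 1 by omega, hDz (m - j - 1)]
        rw [ContinuousLinearMap.sub_apply, ContinuousLinearMap.mul_apply,
          ContinuousLinearMap.mul_apply, haz, map_zero, sub_zero, haapp, map_smul]
        rw [smul_eq_mul, hu, mul_zero, mul_zero, zero_smul, smul_zero]
  have hsum2 : ∑ k : Fin (m + 2),
      (commPoly (m + 2) (Function.update (fun i => ((A i : X →L[ℂ] X))) k (L (A k)))) z =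
      ((-1 : ℂ) ^ (m + 1) * t ^ m * f ((L ⟨a, hau⟩) z)) • x +
        (t ^ m * f ((L ⟨b, hbx⟩) z)) • u := by
    rw [Finset.sum_congr rfl (fun k _ => hterm k), Finset.sum_add_distrib,
      Finset.sum_ite_eq' Finset.univ (0 : Fin (m + 2)),
      Finset.sum_ite_eq' Finset.univ (Fin.last (m + 1))]
    simp
  rw [hsum2] at hsumz
  exact hsumz


lemma exists_ker_notmul {X : Type*} [NormedAddCommGroup X] [NormedSpace ℂ X]
    (hdim : 2 < Module.rank ℂ X) (f : X →L[ℂ] ℂ) (hf0 : f ≠ 0) (u : X) (hu : f u = 0) :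
    ∃ w : X, f w = 0 ∧ ∀ c : ℂ, c • u ≠ w := by
  set K := LinearMap.ker (f : X →ₗ[ℂ] ℂ) with hK
  obtain ⟨x₁, hx₁⟩ : ∃ x₁ : X, f x₁ ≠ 0 := by
    by_contra h
    push_neg at h
    exact hf0 (ContinuousLinearMap.ext fun w => by simp [h w])
  have hnot : ¬ (Module.rank ℂ K ≤ 1) := by
    intro hle
    rw [rank_le_one_iff] at hle
    obtain ⟨v₀, hv₀⟩ := hle
    have hspan : (Submodule.span ℂ {x₁, (v₀ : X)} : Submodule ℂ X) = ⊤ := by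
      rw [Submodule.eq_top_iff']
      intro y
      have hk : y - (f y / f x₁) • x₁ ∈ K := by
        rw [hK, LinearMap.mem_ker]
        have h2 : (f : X →ₗ[ℂ] ℂ) (y - (f y / f x₁) • x₁) = f y - (f y / f x₁) * f x₁ := by
          simp
        rw [h2]
        field_simp
        ring
      obtain ⟨c, hc⟩ := hv₀ ⟨_, hk⟩
      have hval : c • (v₀ : X) = y - (f y / f x₁) • x₁ := congrArg Subtype.val hc
      have hy : y = (f y / f x₁) • x₁ + c • (v₀ : X) := by rw [hval]; abel
      rw [hy]
      exact Submodule.add_mem _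
        (Submodule.smul_mem _ _ (Submodule.subset_span (by simp)))
        (Submodule.smul_mem _ _ (Submodule.subset_span (by simp)))
    have h2 : Module.rank ℂ X ≤ 2 := by
      have h3 := rank_span_le (R := ℂ) ({x₁, (v₀ : X)} : Set X)
      rw [hspan] at h3
      have h4 : Cardinal.mk ({x₁, (v₀ : X)} : Set X) ≤ 2 := by
        refine (Cardinal.mk_insert_le).trans ?_
        simp [Cardinal.mk_singleton]
        norm_num
      calc Module.rank ℂ X = Module.rank ℂ (⊤ : Submodule ℂ X) := (rank_top ℂ X).symm
        _ ≤ Cardinal.mk ({x₁, (v₀ : X)} : Set X) := h3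
        _ ≤ 2 := h4
    exact absurd h2 (not_le.mpr hdim)
  rw [rank_le_one_iff] at hnot
  push_neg at hnot
  obtain ⟨v, hv⟩ := hnot ⟨u, by simpa [hK, LinearMap.mem_ker] using hu⟩
  refine ⟨(v : X), by simpa [hK, LinearMap.mem_ker] using v.2, fun c hc => ?_⟩
  exact hv c (Subtype.ext (by simpa using hc))

/-- (Lemma 3.8 of the paper.)  The scalar `c` with
`(L(x ⊗ f) - h(x,f) I) z = c x` does not depend on the choice of the nonzero vector
`x`. -/
theorem statement10 {X : Type*} [NormedAddCommGroup X] [NormedSpace ℂ X] [CompleteSpace X]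
    (hdim : 2 < Module.rank ℂ X)
    (𝒩 : Set (Submodule ℂ X)) (hnest : IsNest 𝒩)
    (hnontrivial : 𝒩 ≠ ({⊥, ⊤} : Set (Submodule ℂ X)))
    (hdimann : 1 < Module.rank ℂ ↥(annihilatorOf (nestXminus 𝒩)))
    (𝒜 : NonUnitalSubalgebra ℂ (X →L[ℂ] X))
    (h𝒜 : ∀ T ∈ 𝒜, T ∈ nestAlgebra 𝒩)
    -- (♠1) : `X₋^⊥(𝒜) ≠ {0}` and `X₋^⊥(𝒜)` is a linear subspace of `X*`
    (hS1 : XannA 𝒩 𝒜 ≠ ({0} : Set (X →L[ℂ] ℂ)) ∧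
      ∃ p : Submodule ℂ (X →L[ℂ] ℂ), (p : Set (X →L[ℂ] ℂ)) = XannA 𝒩 𝒜)
    -- (♠2) : for each `f ∈ X₋^⊥(𝒜)` there exists `y ∈ X \ X₋` with `y ⊗ f ∈ 𝒜`
    (hS2 : ∀ f ∈ XannA 𝒩 𝒜, ∃ y : X, y ∉ nestXminus 𝒩 ∧ f.smulRight y ∈ 𝒜)
    -- (♠3) : `x ⊗ f ∈ 𝒜` for every `x ∈ X(𝒜)` and `f ∈ X₋^⊥(𝒜)`
    (hS3 : ∀ x ∈ XofA 𝒜, ∀ f ∈ XannA 𝒩 𝒜, f.smulRight x ∈ 𝒜)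
    -- (♠4) : `dim(X(𝒜) ∩ ker fᵢ) > 1` and `X(𝒜) ∩ ker f₁ ∩ ker f₂ ≠ {0}`
    (hS4 : ∀ f₁ ∈ XannA 𝒩 𝒜, ∀ f₂ ∈ XannA 𝒩 𝒜,
      (∃ u v : X, u ∈ XofA 𝒜 ∧ f₁ u = 0 ∧ v ∈ XofA 𝒜 ∧ f₁ v = 0 ∧
        LinearIndependent ℂ ![u, v]) ∧
      (∃ u v : X, u ∈ XofA 𝒜 ∧ f₂ u = 0 ∧ v ∈ XofA 𝒜 ∧ f₂ v = 0 ∧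
        LinearIndependent ℂ ![u, v]) ∧
      (∃ z : X, z ≠ 0 ∧ z ∈ XofA 𝒜 ∧ f₁ z = 0 ∧ f₂ z = 0))
    -- (♠5) : `X(𝒜) = X`
    (hS5 : XofA 𝒜 = Set.univ)
    (n : ℕ) (hn : 2 ≤ n)
    (L : ↥𝒜 →ₗ[ℂ] (X →L[ℂ] X)) (hL : IsLieNDerivNU 𝒜 n L) :
    ∀ f ∈ XannA 𝒩 𝒜, f ≠ 0 → ∀ x₁ x₂ : X, x₁ ≠ 0 → x₂ ≠ 0 → ∀ z : X, f z = 0 →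
      ∀ (hm₁ : f.smulRight x₁ ∈ 𝒜) (hm₂ : f.smulRight x₂ ∈ 𝒜), ∀ c₁ c₂ : ℂ,
        (L ⟨f.smulRight x₁, hm₁⟩) z - hAux 𝒜 L x₁ f • z = c₁ • x₁ →
        (L ⟨f.smulRight x₂, hm₂⟩) z - hAux 𝒜 L x₂ f • z = c₂ • x₂ →
        c₁ = c₂ := by
  intro f hf hf0 x₁ x₂ hx₁ hx₂ z hz hm₁ hm₂ c₁ c₂ hc₁ hc₂
  obtain ⟨m, rfl⟩ : ∃ m, n = m + 2 := ⟨n - 2, by omega⟩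
  have hmem : ∀ y : X, f.smulRight y ∈ 𝒜 := fun y => hS3 y (by rw [hS5]; trivial) f hf
  obtain ⟨x₀, hx₀⟩ : ∃ x₀ : X, f x₀ = 1 := by
    obtain ⟨v, hv⟩ : ∃ v, f v ≠ 0 := by
      by_contra h
      push_neg at h
      exact hf0 (ContinuousLinearMap.ext fun w => by simp [h w])
    exact ⟨(f v)⁻¹ • v, by simp [inv_mul_cancel₀ hv]⟩
  set μ : ℂ := f ((L ⟨f.smulRight x₀, hmem x₀⟩) z) with hμ
  have claim0 : ∀ u : X, f u = 0 → f ((L ⟨f.smulRight u, hmem u⟩) z) = 0 := by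
    intro u hu
    by_cases hu0 : u = 0
    · subst hu0
      have h0 : (⟨f.smulRight 0, hmem 0⟩ : ↥𝒜) = 0 := Subtype.ext (by ext w; simp)
      rw [h0, map_zero]
      simp
    · obtain ⟨w, hw, hwmul⟩ := exists_ker_notmul hdim f hf0 u hu
      have k1 := keyIdentity 𝒜 m L hL f u x₀ z hu hz (hmem u) (hmem x₀)
      have k2 := keyIdentity 𝒜 m L hL f u (x₀ + w) z hu hz (hmem u) (hmem (x₀ + w))
      have hfx' : f (x₀ + w) = 1 := by simp [hx₀, hw]
      rw [hx₀] at k1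
      rw [hfx'] at k2
      simp only [one_pow, one_smul, one_mul, mul_one] at k1 k2
      by_contra hα
      set α := f ((L ⟨f.smulRight u, hmem u⟩) z) with hαdef
      set d1 := f ((L ⟨f.smulRight x₀, hmem x₀⟩) z) with hd1
      set d2 := f ((L ⟨f.smulRight (x₀ + w), hmem (x₀ + w)⟩) z) with hd2
      set γ : ℂ := (-1 : ℂ) ^ (m + 1) * α with hγ
      have hγne : γ ≠ 0 := mul_ne_zero (pow_ne_zero _ (by norm_num)) hα
      have hsub := k1.symm.trans k2
      have h5 : γ • w = (d1 - d2) • u := by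
        rw [smul_add] at hsub
        linear_combination (norm := module) -hsub
      have h6 : w = (γ⁻¹ * (d1 - d2)) • u := by
        rw [← smul_smul, ← h5, inv_smul_smul₀ hγne]
      exact hwmul _ h6.symm
  have claim1 : ∀ u : X, f u = 0 → (L ⟨f.smulRight u, hmem u⟩) z = μ • u := by
    intro u hu
    have k1 := keyIdentity 𝒜 m L hL f u x₀ z hu hz (hmem u) (hmem x₀)
    rw [hx₀] at k1
    simp only [one_pow, one_smul, one_mul, mul_one] at k1
    rw [claim0 u hu] at k1
    simpa [hμ] using k1
  have claim2 : ∀ x : X, f ((L ⟨f.smulRight x, hmem x⟩) z) = f x * μ := by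
    intro x
    by_cases hfx : f x = 0
    · rw [hfx, zero_mul]
      exact claim0 x hfx
    · obtain ⟨u₀, hu₀f, hu₀⟩ : ∃ u₀ : X, f u₀ = 0 ∧ u₀ ≠ 0 := by
        obtain ⟨w, hw, hwmul⟩ := exists_ker_notmul hdim f hf0 0 (map_zero f)
        exact ⟨w, hw, fun h => hwmul 0 (by simp [h])⟩
      have k := keyIdentity 𝒜 m L hL f u₀ x z hu₀f hz (hmem u₀) (hmem x)
      rw [claim0 u₀ hu₀f, claim1 u₀ hu₀f] at k
      have k' : ((f x) ^ (m + 1) * μ) • u₀ =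
          ((f x) ^ m * f ((L ⟨f.smulRight x, hmem x⟩) z)) • u₀ := by
        simpa [smul_smul] using k
      have hcoef : (f x) ^ (m + 1) * μ = (f x) ^ m * f ((L ⟨f.smulRight x, hmem x⟩) z) :=
        smul_left_injective ℂ hu₀ k'
      have hpm : (f x) ^ m ≠ 0 := pow_ne_zero _ hfx
      rw [pow_succ] at hcoef
      have h7 : (f x) ^ m * (f x * μ) = (f x) ^ m * f ((L ⟨f.smulRight x, hmem x⟩) z) := by
        rw [← mul_assoc]; exact hcoef
      exact (mul_left_cancel₀ hpm h7).symm
  have key : ∀ (x : X), x ≠ 0 → ∀ (hm : f.smulRight x ∈ 𝒜) (c : ℂ),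
      (L ⟨f.smulRight x, hm⟩) z - hAux 𝒜 L x f • z = c • x → c = μ := by
    intro x hx hm c hc
    by_cases hfx : f x = 0
    · have hA0 : hAux 𝒜 L x f = 0 := by rw [hAux, if_pos hfx]
      rw [hA0, zero_smul, sub_zero] at hc
      have h1 : μ • x = c • x := (claim1 x hfx).symm.trans hc
      exact (smul_left_injective ℂ hx h1).symm
    · have h1 := congrArg f hc
      simp only [map_sub, map_smul, hz, smul_eq_mul, mul_zero, sub_zero] at h1
      have h2 : (c : ℂ) * f x = f x * μ :=
        calc c * f x = f ((L ⟨f.smulRight x, hm⟩) z) := h1.symm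
          _ = f x * μ := claim2 x
      have h3 : f x * c = f x * μ := by rw [mul_comm (f x) c]; exact h2
      exact mul_left_cancel₀ hfx h3
  rw [key x₁ hx₁ hm₁ c₁ hc₁, key x₂ hx₂ hm₂ c₂ hc₂]
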